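/- A consumption experiment E = ((x^t, m^t), B^t)_{t=1}^T can be rationalized by a quasilinear utility function if and only if it satisfies cyclical monotonicity. -/

import Mathlib

/-- Theorem 1: a consumption experiment can be rationalized by a quasilinear utility
function if and only if it satisfies cyclical monotonicity. -/
theorem ql_rationalizable_iff_cyclically_monotone {n T : ℕ} (hT : 0 < T)
    (X : Set (Fin n → ℝ)) (xs : Fin T → (Fin n → ℝ)) (hxX : ∀ t, xs t ∈ X)
    (μ : Fin T → (Fin n → ℝ) → ℝ)
    (hcont : ∀ t, ContinuousOn (μ t) X)
    (hdecr : ∀ t, ∀ x ∈ X, ∀ y ∈ X, x ≤ y → μ t y ≤ μ t x)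
    (hsdecr : ∀ t, ∀ x ∈ X, ∀ y ∈ X, x < y → μ t y < μ t x) :
    (∃ u : (Fin n → ℝ) → ℝ,
      ∀ t, ∀ x ∈ X, ∀ m : ℝ, m ≤ μ t x → u x + m ≤ u (xs t) + μ t (xs t)) ↔
    (∀ (N : ℕ) (k : ℕ → Fin T), 0 < N → k N = k 0 →
      0 ≤ ∑ j ∈ Finset.range N,
        (μ (k j) (xs (k j)) - μ (k (j + 1)) (xs (k j)))) := by
  constructor
  · rintro ⟨u, hu⟩ N k hN hk
    have hterm : ∀ j ∈ Finset.range N,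
        (fun i => u (xs (k i)) + μ (k i) (xs (k i))) j
          - (fun i => u (xs (k i)) + μ (k i) (xs (k i))) (j + 1)
        ≤ μ (k j) (xs (k j)) - μ (k (j + 1)) (xs (k j)) := by
      intro j _
      have := hu (k (j + 1)) (xs (k j)) (hxX _) (μ (k (j + 1)) (xs (k j))) le_rfl
      simp only
      linarith
    have hsum := Finset.sum_le_sum hterm
    rw [Finset.sum_range_sub' (fun i => u (xs (k i)) + μ (k i) (xs (k i))) N] at hsum
    simp only [hk] at hsum
    linarith
  · intro H
    have z : Fin T := ⟨0, hT⟩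
    haveI : Nonempty (Fin T) := ⟨z⟩
    -- cyclical monotonicity for the reversed-type sums
    have hcyc : ∀ (N : ℕ) (k : ℕ → Fin T), 0 < N → k N = k 0 →
        0 ≤ ∑ j ∈ Finset.range N,
          (μ (k j) (xs (k j)) - μ (k j) (xs (k (j + 1)))) := by
      intro N k hN hk
      have H1 := H N (fun j => k (N - j)) hN (by simp [hk])
      rw [← Finset.sum_range_reflect] at H1
      have hre : ∀ j ∈ Finset.range N,
          (μ (k (N - (N - 1 - j))) (xs (k (N - (N - 1 - j))))
            - μ (k (N - (N - 1 - j + 1))) (xs (k (N - (N - 1 - j)))))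
          = μ (k (j + 1)) (xs (k (j + 1))) - μ (k j) (xs (k (j + 1))) := by
        intro j hj
        rw [Finset.mem_range] at hj
        have h1 : N - (N - 1 - j) = j + 1 := by omega
        have h2 : N - (N - 1 - j + 1) = j := by omega
        rw [h1, h2]
      rw [Finset.sum_congr rfl hre] at H1
      have hshift : ∑ j ∈ Finset.range N, μ (k (j + 1)) (xs (k (j + 1)))
          = ∑ j ∈ Finset.range N, μ (k j) (xs (k j)) := by
        have h1 := Finset.sum_range_succ' (fun i => μ (k i) (xs (k i))) N
        have h2 := Finset.sum_range_succ (fun i => μ (k i) (xs (k i))) N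
        simp only [hk] at h1 h2
        linarith
      rw [Finset.sum_sub_distrib] at H1 ⊢
      linarith [hshift]
    -- set of path costs from z to t
    set S : Fin T → Set ℝ := fun t => {r : ℝ | ∃ (N : ℕ) (k : ℕ → Fin T),
      k 0 = z ∧ k N = t ∧ r = ∑ j ∈ Finset.range N,
        (μ (k j) (xs (k j)) - μ (k j) (xs (k (j + 1))))} with hS
    have hne : ∀ t, (S t).Nonempty := by
      intro t
      refine ⟨μ z (xs z) - μ z (xs t), 1, fun j => if j = 0 then z else t, ?_, ?_, ?_⟩
      · simp
      · simp
      · simp [Finset.sum_range_one]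
    have hmem_ext : ∀ s t r, r ∈ S s → r + (μ s (xs s) - μ s (xs t)) ∈ S t := by
      intro s t r hr
      obtain ⟨N, k, hk0, hkN, rfl⟩ := hr
      set k' : ℕ → Fin T := fun j => if j < N + 1 then k j else t with hk'
      refine ⟨N + 1, k', ?_, ?_, ?_⟩
      · simp [hk', hk0]
      · simp [hk']
      · rw [Finset.sum_range_succ]
        have h1 : k' N = s := by simp [hk', hkN]
        have h2 : k' (N + 1) = t := by simp [hk']
        rw [h1, h2]
        have h3 : ∑ j ∈ Finset.range N,
            (μ (k' j) (xs (k' j)) - μ (k' j) (xs (k' (j + 1))))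
            = ∑ j ∈ Finset.range N,
            (μ (k j) (xs (k j)) - μ (k j) (xs (k (j + 1)))) := by
          refine Finset.sum_congr rfl fun j hj => ?_
          rw [Finset.mem_range] at hj
          have e1 : k' j = k j := by
            simp [hk', Nat.lt_succ_of_lt hj]
            intro h; exact absurd h (by omega)
          have e2 : k' (j + 1) = k (j + 1) := by
            simp [hk', Nat.succ_lt_succ hj]
            intro h; exact absurd h (by omega)
          rw [e1, e2]
        rw [h3]
    have hSz : ∀ r ∈ S z, 0 ≤ r := by
      rintro r ⟨N, k, hk0, hkN, rfl⟩
      rcases Nat.eq_zero_or_pos N with h | h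
      · simp [h]
      · exact hcyc N k h (hkN.trans hk0.symm)
    have hbdd : ∀ t, BddBelow (S t) := by
      intro t
      refine ⟨-(μ t (xs t) - μ t (xs z)), fun r hr => ?_⟩
      have := hSz _ (hmem_ext t z r hr)
      linarith
    have htri : ∀ s t, sInf (S t) ≤ sInf (S s) + (μ s (xs s) - μ s (xs t)) := by
      intro s t
      have h : ∀ r ∈ S s, sInf (S t) - (μ s (xs s) - μ s (xs t)) ≤ r := by
        intro r hr
        have := csInf_le (hbdd t) (hmem_ext s t r hr)
        linarith
      have := le_csInf (hne s) h
      linarith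
    refine ⟨fun x => Finset.univ.inf' Finset.univ_nonempty
      (fun t => sInf (S t) + μ t (xs t) - μ t x), ?_⟩
    intro t x hx m hm
    have h1 : Finset.univ.inf' Finset.univ_nonempty
        (fun s => sInf (S s) + μ s (xs s) - μ s x)
        ≤ sInf (S t) + μ t (xs t) - μ t x :=
      Finset.inf'_le _ (Finset.mem_univ t)
    have h2 : sInf (S t) ≤ Finset.univ.inf' Finset.univ_nonempty
        (fun s => sInf (S s) + μ s (xs s) - μ s (xs t)) := by
      refine Finset.le_inf' _ _ fun s _ => ?_
      have := htri s t
      linarith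
    linarith
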